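/- arXiv:2304.02398 — 2 statements merged into one kernel-verified Lean document; each statement's English description precedes it below -/
import Mathlib

section
/- (Tightness of the SROCR relaxation at ω = 1) Let V be an M×M complex positive semidefinite matrix and let φ ∈ ℂ^M satisfy ‖φ‖₂ ≤ 1. If φ^H V φ ≥ Tr(V), then V = Tr(V) · φ φ^H; in particular, rank(V) ≤ 1. -/
open Matrix ComplexOrder

/-- **Tightness of the SROCR relaxation at `ω = 1`.** Let `V ⪰ 0` be `M×M` and `φ ∈ ℂᴹ` with
`‖φ‖₂ ≤ 1`. If `φᴴ V φ ≥ Tr(V)`, then `V = Tr(V) · φ φᴴ`; in particular `rank(V) ≤ 1`. -/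
theorem srocr_tight {M : ℕ} {V : Matrix (Fin M) (Fin M) ℂ} (hV : V.PosSemidef)
    (φ : Fin M → ℂ) (hφ : ∑ i, ‖φ i‖ ^ 2 ≤ 1)
    (h : V.trace.re ≤ (star φ ⬝ᵥ V.mulVec φ).re) :
    V = V.trace • Matrix.vecMulVec φ (star φ) ∧ V.rank ≤ 1 := by
  open scoped MatrixOrder Matrix.Norms.L2Operator in
  obtain ⟨B, hB⟩ := CStarAlgebra.nonneg_iff_eq_star_mul_self.mp hV.nonneg
  rw [Matrix.star_eq_conjTranspose] at hB
  subst hB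
  set ψ : Fin M → ℂ := B.mulVec φ with hψdef
  set N : ℝ := ∑ j, Complex.normSq (φ j) with hNdef
  set P : ℝ := ∑ i, Complex.normSq (ψ i) with hPdef
  set T : ℝ := ∑ i, ∑ j, Complex.normSq (B i j) with hTdef
  have hN1 : N ≤ 1 := by
    refine le_trans (le_of_eq ?_) hφ
    exact Finset.sum_congr rfl fun j _ => by
      rw [Complex.normSq_eq_norm_sq]
  have hN0 : 0 ≤ N := Finset.sum_nonneg fun j _ => Complex.normSq_nonneg _
  have hP0 : 0 ≤ P := Finset.sum_nonneg fun i _ => Complex.normSq_nonneg _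
  -- trace = T
  have htr : (Bᴴ * B).trace = (T : ℂ) := by
    rw [Matrix.trace, hTdef]
    push_cast
    rw [Finset.sum_comm]
    refine Finset.sum_congr rfl fun i _ => ?_
    simp only [Matrix.diag, Matrix.mul_apply, Matrix.conjTranspose_apply]
    refine Finset.sum_congr rfl fun j _ => ?_
    rw [show star (B j i) = (starRingEnd ℂ) (B j i) from rfl,
      ← Complex.normSq_eq_conj_mul_self]
  -- quadratic form = P
  have hqf : (star φ ⬝ᵥ (Bᴴ * B).mulVec φ) = (P : ℂ) := by
    rw [← Matrix.mulVec_mulVec, Matrix.dotProduct_mulVec, ← Matrix.star_mulVec, hPdef]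
    push_cast
    rw [dotProduct]
    refine Finset.sum_congr rfl fun i _ => ?_
    simp only [Pi.star_apply, RCLike.star_def]
    rw [← Complex.normSq_eq_conj_mul_self]
  have hTP : T ≤ P := by
    rw [htr, hqf] at h
    simpa using h
  -- Frobenius norm of B - ψ (star φ) is nonpositive, hence zero
  have key : ∀ i j, B i j = ψ i * (starRingEnd ℂ) (φ j) := by
    have expand : ∑ i, ∑ j, Complex.normSq (B i j - ψ i * (starRingEnd ℂ) (φ j))
        = T - 2 * P + P * N := by
      have hrow : ∀ i, ∑ j, Complex.normSq (B i j - ψ i * (starRingEnd ℂ) (φ j))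
          = (∑ j, Complex.normSq (B i j)) - 2 * Complex.normSq (ψ i)
            + Complex.normSq (ψ i) * N := by
        intro i
        have h1 : ∀ j, Complex.normSq (B i j - ψ i * (starRingEnd ℂ) (φ j))
            = Complex.normSq (B i j) + Complex.normSq (ψ i) * Complex.normSq (φ j)
              - 2 * (B i j * ((starRingEnd ℂ) (ψ i) * φ j)).re := by
          intro j
          rw [Complex.normSq_sub, Complex.normSq_mul, Complex.normSq_conj,
            _root_.map_mul, Complex.conj_conj]
        have h2 : ∑ j, (B i j * ((starRingEnd ℂ) (ψ i) * φ j)).re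
            = Complex.normSq (ψ i) := by
          have e : ∑ j, B i j * ((starRingEnd ℂ) (ψ i) * φ j)
              = ((Complex.normSq (ψ i) : ℝ) : ℂ) := by
            calc ∑ j, B i j * ((starRingEnd ℂ) (ψ i) * φ j)
                = (starRingEnd ℂ) (ψ i) * ∑ j, B i j * φ j := by
                  rw [Finset.mul_sum]; exact Finset.sum_congr rfl fun j _ => by ring
              _ = ((Complex.normSq (ψ i) : ℝ) : ℂ) := by
                  rw [show ∑ j, B i j * φ j = ψ i from rfl,
                    ← Complex.normSq_eq_conj_mul_self]
          rw [← Complex.re_sum, e, Complex.ofReal_re]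
        simp only [h1]
        rw [Finset.sum_sub_distrib, Finset.sum_add_distrib, ← Finset.mul_sum,
          ← Finset.mul_sum, h2, ← hNdef]
        ring
      rw [Finset.sum_congr rfl fun i _ => hrow i]
      rw [Finset.sum_add_distrib, Finset.sum_sub_distrib, ← Finset.mul_sum, ← Finset.sum_mul]
    have nonpos : T - 2 * P + P * N ≤ 0 := by nlinarith
    have hsum0 : ∑ i, ∑ j, Complex.normSq (B i j - ψ i * (starRingEnd ℂ) (φ j)) = 0 := by
      refine le_antisymm (expand ▸ nonpos) ?_
      exact Finset.sum_nonneg fun i _ => Finset.sum_nonneg fun j _ => Complex.normSq_nonneg _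
    intro i j
    have hrow0 : ∑ j, Complex.normSq (B i j - ψ i * (starRingEnd ℂ) (φ j)) = 0 :=
      (Finset.sum_eq_zero_iff_of_nonneg fun i _ =>
        Finset.sum_nonneg fun j _ => Complex.normSq_nonneg _).mp hsum0 i (Finset.mem_univ _)
    have hentry : Complex.normSq (B i j - ψ i * (starRingEnd ℂ) (φ j)) = 0 :=
      (Finset.sum_eq_zero_iff_of_nonneg fun j _ => Complex.normSq_nonneg _).mp hrow0 j
        (Finset.mem_univ _)
    have := Complex.normSq_eq_zero.mp hentry
    linear_combination this
  -- ψ i = ψ i * N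
  have hψN : ∀ i, ψ i = ψ i * (N : ℂ) := by
    intro i
    conv_lhs => rw [show ψ i = ∑ j, B i j * φ j from rfl]
    calc ∑ j, B i j * φ j = ∑ j, ψ i * ((starRingEnd ℂ) (φ j) * φ j) := by
          refine Finset.sum_congr rfl fun j _ => by rw [key i j]; ring
      _ = ψ i * (N : ℂ) := by
          rw [← Finset.mul_sum, hNdef]
          push_cast
          congr 1
          exact Finset.sum_congr rfl fun j _ => by
            rw [← Complex.normSq_eq_conj_mul_self]
  -- P * N = P
  have hPN : P * N = P := by
    have hPN2 : P = P * (N * N) := by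
      rw [hPdef, Finset.sum_mul]
      refine Finset.sum_congr rfl fun i _ => ?_
      conv_lhs => rw [hψN i]
      rw [Complex.normSq_mul, Complex.normSq_ofReal]
    rcases eq_or_ne P 0 with hP | hP
    · rw [hP]; ring
    · have hPpos : 0 < P := lt_of_le_of_ne hP0 (Ne.symm hP)
      have hNlt : ¬ N < 1 := fun hlt => by nlinarith [mul_pos hPpos (mul_pos (by linarith : (0:ℝ) < 1 - N) (by linarith : (0:ℝ) < 1 + N))]
      have hN : N = 1 := le_antisymm hN1 (not_lt.mp hNlt)
      rw [hN]; ring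
  have hTPN : T = P * N := by
    rw [hTdef, hPdef, hNdef, Finset.sum_mul_sum]
    refine Finset.sum_congr rfl fun i _ => Finset.sum_congr rfl fun j _ => ?_
    rw [key i j, Complex.normSq_mul, Complex.normSq_conj]
  -- the matrix identity, entrywise
  have hmat : Bᴴ * B = (Bᴴ * B).trace • Matrix.vecMulVec φ (star φ) := by
    rw [htr]
    ext j k
    simp only [Matrix.mul_apply, Matrix.conjTranspose_apply, Matrix.smul_apply,
      Matrix.vecMulVec_apply, Pi.star_apply, smul_eq_mul, RCLike.star_def]
    calc ∑ i, (starRingEnd ℂ) (B i j) * B i k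
        = ∑ i, ((starRingEnd ℂ) (ψ i) * ψ i) * (φ j * (starRingEnd ℂ) (φ k)) := by
          refine Finset.sum_congr rfl fun i _ => ?_
          rw [key i j, key i k]
          simp only [_root_.map_mul, Complex.conj_conj]
          ring
      _ = (P : ℂ) * (φ j * (starRingEnd ℂ) (φ k)) := by
          rw [← Finset.sum_mul]
          congr 1
          rw [hPdef]; push_cast
          exact Finset.sum_congr rfl fun i _ => by rw [← Complex.normSq_eq_conj_mul_self]
      _ = (T : ℂ) * (φ j * (starRingEnd ℂ) (φ k)) := by
          rw [hTPN, hPN]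
  refine ⟨hmat, ?_⟩
  have hsm : (Bᴴ * B).trace • Matrix.vecMulVec φ (star φ)
      = Matrix.vecMulVec ((Bᴴ * B).trace • φ) (star φ) := by
    ext j k
    simp [Matrix.vecMulVec_apply, mul_assoc]
  rw [hmat, hsm, Matrix.vecMulVec_eq (Fin 1)]
  exact le_trans (Matrix.rank_mul_le_left _ _)
    (le_trans (Matrix.rank_le_card_width _) (by simp))
end

section
/- (Equivalence of the ball-constrained quadratic constraint and the LMI, eqs. (13)–(14)) Let W̃ be an n×n complex Hermitian matrix, x̂ ∈ ℂ^n, τ ∈ ℝ, and ξ > 0. Then the semi-infinite condition [for all Δx ∈ ℂ^n with ‖Δx‖₂² ≤ ξ²: (x̂ + Δx)^H W̃ (x̂ + Δx) ≤ τ] holds if and only if there exists a real ϖ ≥ 0 such that the (n+1)×(n+1) Hermitian block matrix [[ϖ·I_n − W̃, −W̃ x̂],[−x̂^H W̃, −ϖ·ξ² − x̂^H W̃ x̂ + τ]] is positive semidefinite. -/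
open Matrix ComplexOrder

namespace BallLMI

variable {n : ℕ}

noncomputable def nsq (y : Fin n → ℂ) : ℝ := ∑ i, ‖y i‖ ^ 2

noncomputable def ip (a b : Fin n → ℂ) : ℂ := star a ⬝ᵥ b

noncomputable def qf (W : Matrix (Fin n) (Fin n) ℂ) (a b : Fin n → ℂ) : ℂ :=
  star a ⬝ᵥ W.mulVec b

lemma nsq_nonneg (y : Fin n → ℂ) : 0 ≤ nsq y :=
  Finset.sum_nonneg fun i _ => by positivity

lemma norm_sq_coe (z : ℂ) : ((‖z‖ : ℝ) : ℂ) ^ 2 = star z * z := by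
  rw [← Complex.ofReal_pow, Complex.star_def, ← Complex.normSq_eq_conj_mul_self,
    Complex.sq_norm]

lemma ip_self (y : Fin n → ℂ) : ip y y = ((nsq y : ℝ) : ℂ) := by
  simp only [ip, nsq, dotProduct, Pi.star_apply]
  push_cast
  exact (Finset.sum_congr rfl fun i _ => (norm_sq_coe (y i))).symm

lemma ip_self_re (y : Fin n → ℂ) : (ip y y).re = nsq y := by
  rw [ip_self]; simp

lemma ip_self' (y : Fin n → ℂ) : star y ⬝ᵥ y = ((nsq y : ℝ) : ℂ) := ip_self y

lemma nsq_eq_zero {y : Fin n → ℂ} (h : nsq y = 0) : y = 0 := by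
  funext i
  have := (Finset.sum_eq_zero_iff_of_nonneg (fun i _ => by positivity)).mp h i (Finset.mem_univ i)
  simpa using this

lemma nsq_smul (c : ℂ) (v : Fin n → ℂ) : nsq (c • v) = ‖c‖ ^ 2 * nsq v := by
  simp [nsq, norm_smul, mul_pow, Finset.mul_sum]

lemma ip_add_left (a b c : Fin n → ℂ) : ip (a + b) c = ip a c + ip b c := by
  simp [ip, add_dotProduct]

lemma ip_add_right (a b c : Fin n → ℂ) : ip a (b + c) = ip a b + ip a c := by
  simp [ip, dotProduct_add]

lemma ip_smul_left (c : ℂ) (a b : Fin n → ℂ) : ip (c • a) b = star c * ip a b := by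
  simp [ip, star_smul, smul_dotProduct, smul_eq_mul]

lemma ip_smul_right (c : ℂ) (a b : Fin n → ℂ) : ip a (c • b) = c * ip a b := by
  simp [ip, dotProduct_smul, smul_eq_mul]

lemma ip_conj (a b : Fin n → ℂ) : ip b a = star (ip a b) := by
  rw [ip, ip, star_dotProduct]

lemma ip_sub_right (a b c : Fin n → ℂ) : ip a (b - c) = ip a b - ip a c := by
  simp [ip, dotProduct_sub]

lemma ip_sub_left (a b c : Fin n → ℂ) : ip (a - b) c = ip a c - ip b c := by
  simp [ip, star_sub, sub_dotProduct]

lemma ip_neg_right (a b : Fin n → ℂ) : ip a (-b) = -ip a b := by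
  simp [ip, dotProduct_neg]

lemma ip_zero_right (a : Fin n → ℂ) : ip a 0 = 0 := by simp [ip]

lemma re_conj_mul_real (α : ℂ) (r : ℝ) : (star α * (r : ℂ)).re = α.re * r := by
  simp [Complex.star_def, Complex.mul_re, Complex.conj_re, Complex.conj_im]

lemma qf_conj {W : Matrix (Fin n) (Fin n) ℂ} (hW : W.IsHermitian) (a b : Fin n → ℂ) :
    qf W b a = star (qf W a b) := by
  unfold qf
  rw [star_dotProduct, star_mulVec, hW.eq, ← dotProduct_mulVec]

lemma qf_self_re_coe {W : Matrix (Fin n) (Fin n) ℂ} (hW : W.IsHermitian) (a : Fin n → ℂ) :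
    (((qf W a a).re : ℝ) : ℂ) = qf W a a := by
  apply Complex.conj_eq_iff_re.mp
  rw [← Complex.star_def]
  exact (qf_conj hW a a).symm

lemma qf_add_left (W : Matrix (Fin n) (Fin n) ℂ) (a b c : Fin n → ℂ) :
    qf W (a + b) c = qf W a c + qf W b c := by
  simp [qf, add_dotProduct]

lemma qf_add_right (W : Matrix (Fin n) (Fin n) ℂ) (a b c : Fin n → ℂ) :
    qf W a (b + c) = qf W a b + qf W a c := by
  simp [qf, mulVec_add, dotProduct_add]

lemma qf_smul_left (W : Matrix (Fin n) (Fin n) ℂ) (c : ℂ) (a b : Fin n → ℂ) :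
    qf W (c • a) b = star c * qf W a b := by
  simp [qf, star_smul, smul_dotProduct, smul_eq_mul]

lemma qf_smul_right (W : Matrix (Fin n) (Fin n) ℂ) (c : ℂ) (a b : Fin n → ℂ) :
    qf W a (c • b) = c * qf W a b := by
  simp [qf, mulVec_smul, dotProduct_smul, smul_eq_mul]

lemma qf_eq_ip_mulVec {W : Matrix (Fin n) (Fin n) ℂ} (hW : W.IsHermitian) (a b : Fin n → ℂ) :
    qf W a b = ip (W.mulVec a) b := by
  unfold qf ip
  rw [star_mulVec, hW.eq, ← dotProduct_mulVec]

lemma qf_expand {W : Matrix (Fin n) (Fin n) ℂ} (hW : W.IsHermitian) (a b : Fin n → ℂ) :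
    (qf W (a + b) (a + b)).re
      = (qf W a a).re + 2 * (qf W a b).re + (qf W b b).re := by
  rw [qf_add_left, qf_add_right, qf_add_right]
  have h : qf W b a = star (qf W a b) := qf_conj hW a b
  simp [h, Complex.add_re, Complex.star_def]
  ring

lemma nsq_expand (a b : Fin n → ℂ) :
    nsq (a + b) = nsq a + 2 * (ip a b).re + nsq b := by
  have h1 : ((nsq (a + b) : ℝ) : ℂ).re = nsq (a + b) := by simp
  rw [← h1, ← ip_self, ip_add_left, ip_add_right, ip_add_right]
  have h : ip b a = star (ip a b) := ip_conj a b
  simp [h, Complex.add_re, Complex.star_def, ip_self]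
  ring

lemma eps_le {a : ℝ} (K K' : ℝ)
    (h : ∀ ε : ℝ, 0 < ε → ε ≤ 1 → a ≤ K * ε + K' * ε ^ 2) : a ≤ 0 := by
  by_contra hc
  push_neg at hc
  have hden : (0:ℝ) < |K| + |K'| + 1 := by positivity
  set ε := min 1 (a / (|K| + |K'| + 1)) with hεdef
  have hpos : 0 < ε := lt_min one_pos (by positivity)
  have hle1 : ε ≤ 1 := min_le_left _ _
  have h2 := h ε hpos hle1
  have hεa : ε ≤ a / (|K| + |K'| + 1) := min_le_right _ _
  have hεsq : ε ^ 2 ≤ ε := by nlinarith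
  have hK : K * ε ≤ |K| * ε := by nlinarith [le_abs_self K]
  have hK' : K' * ε ^ 2 ≤ |K'| * ε := by nlinarith [le_abs_self K', abs_nonneg K', abs_nonneg K]
  have hεa' : ε * (|K| + |K'| + 1) ≤ a := by
    calc ε * (|K| + |K'| + 1) ≤ (a / (|K| + |K'| + 1)) * (|K| + |K'| + 1) :=
          mul_le_mul_of_nonneg_right hεa hden.le
      _ = a := by field_simp
  nlinarith

lemma max_dir {p q : ℝ} (ε : ℝ) (hε : 0 < ε)
    (h : ∀ t : ℝ, 0 < t → t ≤ ε → 2 * t * p + t ^ 2 * q ≤ 0) : p ≤ 0 := by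
  refine eps_le (|q| * ε / 2) 0 fun δ hδ hδ1 => ?_
  have ht := h (ε * δ) (by positivity) (by nlinarith)
  have h1 : 0 < ε * δ := mul_pos hε hδ
  have h2 : -((ε * δ) ^ 2 * |q|) ≤ (ε * δ) ^ 2 * q := by nlinarith [neg_abs_le q, sq_nonneg (ε * δ)]
  nlinarith [mul_pos h1 h1]

lemma exists_max (W : Matrix (Fin n) (Fin n) ℂ) (x : Fin n → ℂ) (ξ : ℝ) (hξ : 0 < ξ) :
    ∃ y : Fin n → ℂ, nsq y ≤ ξ ^ 2 ∧
      ∀ z : Fin n → ℂ, nsq z ≤ ξ ^ 2 →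
        (qf W (x + z) (x + z)).re ≤ (qf W (x + y) (x + y)).re := by
  have hcont : Continuous fun y : Fin n → ℂ => (qf W (x + y) (x + y)).re := by
    unfold qf mulVec dotProduct
    fun_prop
  have hnsq : Continuous fun y : Fin n → ℂ => nsq y := by
    unfold nsq; fun_prop
  have hclosed : IsClosed {y : Fin n → ℂ | nsq y ≤ ξ ^ 2} :=
    isClosed_le hnsq continuous_const
  have hbdd : Bornology.IsBounded {y : Fin n → ℂ | nsq y ≤ ξ ^ 2} := by
    apply (Metric.isBounded_closedBall (x := (0 : Fin n → ℂ)) (r := ξ)).subset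
    intro y hy
    simp only [Metric.mem_closedBall, dist_zero_right]
    rw [pi_norm_le_iff_of_nonneg hξ.le]
    intro i
    have h1 : ‖y i‖ ^ 2 ≤ ξ ^ 2 := by
      refine le_trans ?_ hy
      exact Finset.single_le_sum (f := fun j => ‖y j‖ ^ 2) (fun j _ => by positivity)
        (Finset.mem_univ i)
    exact le_of_pow_le_pow_left₀ two_ne_zero hξ.le (by simpa using h1)
  have hcompact : IsCompact {y : Fin n → ℂ | nsq y ≤ ξ ^ 2} :=
    Metric.isCompact_of_isClosed_isBounded hclosed hbdd
  have hne : {y : Fin n → ℂ | nsq y ≤ ξ ^ 2}.Nonempty :=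
    ⟨0, by simp [nsq]; positivity⟩
  obtain ⟨y, hyS, hmax⟩ := hcompact.exists_isMaxOn hne hcont.continuousOn
  exact ⟨y, hyS, fun z hz => hmax hz⟩

/-- KKT conditions for the maximizer of the quadratic on the ball. -/
lemma exists_kkt (W : Matrix (Fin n) (Fin n) ℂ) (hW : W.IsHermitian) (x : Fin n → ℂ)
    (ξ : ℝ) (hξ : 0 < ξ) :
    ∃ (ϖ : ℝ) (y : Fin n → ℂ), 0 ≤ ϖ ∧ nsq y ≤ ξ ^ 2 ∧
      W.mulVec (x + y) = ((ϖ : ℝ) : ℂ) • y ∧ ϖ * (ξ ^ 2 - nsq y) = 0 ∧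
      (∀ v, (qf W v v).re ≤ ϖ * nsq v) ∧
      (∀ z, nsq z ≤ ξ ^ 2 → (qf W (x + z) (x + z)).re ≤ (qf W (x + y) (x + y)).re) := by
  obtain ⟨y, hyS, hmax⟩ := exists_max W x ξ hξ
  set g : Fin n → ℂ := W.mulVec (x + y) with hg
  -- quadratic expansion along direction v with real parameter t
  have hE : ∀ (t : ℝ) (v : Fin n → ℂ),
      (qf W (x + (y + (t : ℂ) • v)) (x + (y + (t : ℂ) • v))).re
        = (qf W (x + y) (x + y)).re + 2 * t * (ip g v).re + t ^ 2 * (qf W v v).re := by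
    intro t v
    rw [← add_assoc, qf_expand hW (x + y) ((t : ℂ) • v), qf_smul_right, qf_smul_left,
      qf_smul_right, qf_eq_ip_mulVec hW (x + y) v, ← hg]
    rw [Complex.star_def, Complex.conj_ofReal]
    simp only [Complex.re_ofReal_mul]
    ring
  have hNy : ∀ (t : ℝ) (v : Fin n → ℂ),
      nsq (y + (t : ℂ) • v) = nsq y + 2 * t * (ip y v).re + t ^ 2 * nsq v := by
    intro t v
    rw [nsq_expand, ip_smul_right, nsq_smul, Complex.re_ofReal_mul]
    rw [show ‖((t : ℝ) : ℂ)‖ = |t| from RCLike.norm_ofReal t]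
    rw [sq_abs]
    ring
  rcases lt_or_eq_of_le hyS with hlt | heq
  · -- interior case : gradient vanishes and W ⪯ 0, take ϖ = 0
    have hfeas : ∀ v : Fin n → ℂ, ∃ ε : ℝ, 0 < ε ∧
        ∀ t : ℝ, 0 < t → t ≤ ε → nsq (y + (t : ℂ) • v) ≤ ξ ^ 2 := by
      intro v
      set δ := ξ ^ 2 - nsq y with hδ
      have hδpos : 0 < δ := by simp [hδ]; linarith
      have hden0 : (0:ℝ) < 2 * |(ip y v).re| + nsq v + 1 := by
        have := nsq_nonneg v; positivity
      refine ⟨min 1 (δ / (2 * |(ip y v).re| + nsq v + 1)), lt_min one_pos (div_pos hδpos hden0), ?_⟩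
      intro t ht htε
      have h1 : t ≤ 1 := le_trans htε (min_le_left _ _)
      have h2 : t ≤ δ / (2 * |(ip y v).re| + nsq v + 1) := le_trans htε (min_le_right _ _)
      have hden : (0:ℝ) < 2 * |(ip y v).re| + nsq v + 1 := hden0
      have h3 : t * (2 * |(ip y v).re| + nsq v + 1) ≤ δ := by
        calc t * (2 * |(ip y v).re| + nsq v + 1)
            ≤ (δ / (2 * |(ip y v).re| + nsq v + 1)) * (2 * |(ip y v).re| + nsq v + 1) :=
              mul_le_mul_of_nonneg_right h2 hden.le
          _ = δ := by field_simp
      rw [hNy]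
      have h4 : 2 * t * (ip y v).re ≤ t * (2 * |(ip y v).re|) := by
        nlinarith [le_abs_self (ip y v).re]
      have h5 : t ^ 2 * nsq v ≤ t * nsq v := by
        have h6 : (0:ℝ) ≤ t - t ^ 2 := by nlinarith
        nlinarith [mul_nonneg h6 (nsq_nonneg v)]
      linarith
    have hg0 : ∀ v, (ip g v).re ≤ 0 := by
      intro v
      obtain ⟨ε, hε, hfe⟩ := hfeas v
      refine max_dir (q := (qf W v v).re) ε hε fun t ht htε => ?_
      have := hmax _ (hfe t ht htε)
      rw [hE] at this
      linarith
    have hgzero : g = 0 := by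
      have h1 : (ip g g).re ≤ 0 := hg0 g
      rw [ip_self_re] at h1
      exact nsq_eq_zero (le_antisymm h1 (nsq_nonneg g))
    have hso : ∀ v, (qf W v v).re ≤ 0 := by
      intro v
      obtain ⟨ε, hε, hfe⟩ := hfeas v
      have := hmax _ (hfe ε hε le_rfl)
      rw [hE, hgzero] at this
      have hip0 : (ip (0 : Fin n → ℂ) v) = 0 := by simp [ip]
      rw [hip0] at this
      simp only [Complex.zero_re] at this
      nlinarith [pow_pos hε 2]
    refine ⟨0, y, le_rfl, hyS, by simp [← hg, hgzero], by ring, fun v => by simpa using hso v,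
      hmax⟩
  · -- boundary case : nsq y = ξ ^ 2
    have hξ2 : (0:ℝ) < ξ ^ 2 := by positivity
    have C1 : ∀ v : Fin n → ℂ, (ip y v).re < 0 → (ip g v).re ≤ 0 := by
      intro v hv
      have hvnsq : (0:ℝ) < nsq v + 1 := by have := nsq_nonneg v; linarith
      set ε := (-2 * (ip y v).re) / (nsq v + 1) with hεdef
      have hεpos : 0 < ε := div_pos (by linarith) hvnsq
      have hεn : ε * (nsq v + 1) = -2 * (ip y v).re := by
        rw [hεdef]; field_simp
      refine max_dir (q := (qf W v v).re) ε hεpos fun t ht htε => ?_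
      have hfe : nsq (y + (t : ℂ) • v) ≤ ξ ^ 2 := by
        rw [hNy, heq]
        have h2 : t ^ 2 * nsq v ≤ t * (ε * nsq v) := by
          nlinarith [mul_nonneg (mul_nonneg ht.le (sub_nonneg.mpr htε)) (nsq_nonneg v)]
        have h3 : ε * nsq v ≤ -2 * (ip y v).re := by nlinarith
        nlinarith
      have := hmax _ hfe
      rw [hE] at this
      linarith
    have C2 : ∀ v : Fin n → ℂ, (ip y v).re ≤ 0 → (ip g v).re ≤ 0 := by
      intro v hv
      refine eps_le ((ip g y).re) 0 fun ε hε hε1 => ?_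
      have key := C1 (v + ((-ε : ℝ) : ℂ) • y) ?_
      · simp only [ip_add_right, ip_smul_right, Complex.add_re, Complex.re_ofReal_mul,
          ip_self_re, heq] at key
        linarith
      · simp only [ip_add_right, ip_smul_right, Complex.add_re, Complex.re_ofReal_mul,
          ip_self_re, heq]
        nlinarith
    have C3 : ∀ v : Fin n → ℂ, ip y v = 0 → ip g v = 0 := by
      intro v hv
      have h1 : (ip g v).re ≤ 0 := C2 v (by rw [hv]; simp)
      have h2 : (ip g (-v)).re ≤ 0 := C2 (-v) (by rw [ip_neg_right, hv]; simp)
      have h3 : (ip g (Complex.I • v)).re ≤ 0 :=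
        C2 (Complex.I • v) (by rw [ip_smul_right, hv]; simp)
      have h4 : (ip g (-(Complex.I • v))).re ≤ 0 :=
        C2 (-(Complex.I • v)) (by rw [ip_neg_right, ip_smul_right, hv]; simp)
      rw [ip_neg_right] at h2 h4
      rw [ip_smul_right] at h3 h4
      simp only [Complex.neg_re, Complex.mul_re, Complex.I_re, Complex.I_im] at h2 h3 h4
      apply Complex.ext <;> simp <;> linarith
    have hyy : ip y y = ((ξ ^ 2 : ℝ) : ℂ) := by rw [ip_self, heq]
    have hξC : ((ξ ^ 2 : ℝ) : ℂ) ≠ 0 := by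
      exact_mod_cast Complex.ofReal_ne_zero.mpr (ne_of_gt hξ2)
    set α : ℂ := ip y g / ((ξ ^ 2 : ℝ) : ℂ) with hα
    have hyP : ip y (g - α • y) = 0 := by
      rw [ip_sub_right, ip_smul_right, hyy, hα]
      field_simp
      ring
    have hgαy : g = α • y := by
      have hgP : ip g (g - α • y) = 0 := C3 _ hyP
      have hPP : ip (g - α • y) (g - α • y) = 0 := by
        rw [ip_sub_left, ip_smul_left, hgP, hyP, mul_zero, sub_zero]
      have : nsq (g - α • y) = 0 := by
        have := congrArg Complex.re hPP
        rwa [ip_self_re] at this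
      have := nsq_eq_zero this
      rwa [sub_eq_zero] at this
    have hgy : ip g y = star α * ((ξ ^ 2 : ℝ) : ℂ) := by
      rw [hgαy, ip_smul_left, hyy]
    have hαre : 0 ≤ α.re := by
      have h5 : (ip g (-y)).re ≤ 0 := C2 (-y)
        (by rw [ip_neg_right, Complex.neg_re, ip_self_re]; linarith [nsq_nonneg y])
      rw [ip_neg_right, hgy] at h5
      rw [Complex.neg_re, re_conj_mul_real] at h5
      nlinarith
    have hαim : α.im = 0 := by
      have h6 : (ip g (Complex.I • y)).re ≤ 0 := by
        refine C2 (Complex.I • y) ?_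
        rw [ip_smul_right, hyy]
        simp [Complex.mul_re, ← Complex.ofReal_pow]
      have h7 : (ip g (-(Complex.I • y))).re ≤ 0 := by
        refine C2 (-(Complex.I • y)) ?_
        rw [ip_neg_right, ip_smul_right, hyy]
        simp [Complex.mul_re, ← Complex.ofReal_pow]
      rw [ip_smul_right, hgy] at h6
      rw [ip_neg_right, ip_smul_right, hgy] at h7
      simp only [Complex.neg_re, Complex.mul_re, Complex.mul_im, Complex.I_re, Complex.I_im,
        Complex.star_def, Complex.conj_re, Complex.conj_im, Complex.ofReal_re,
        Complex.ofReal_im] at h6 h7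
      nlinarith
    set ϖ := α.re with hϖdef
    have hαϖ : α = ((ϖ : ℝ) : ℂ) := Complex.ext (by simp [hϖdef]) (by simp [hαim])
    have hgϖ : g = ((ϖ : ℝ) : ℂ) • y := by rw [hgαy, hαϖ]
    have hipg : ∀ w, (ip g w).re = ϖ * (ip y w).re := by
      intro w
      rw [hgαy, ip_smul_left, hαϖ, Complex.star_def, Complex.conj_ofReal,
        Complex.re_ofReal_mul]
    -- second order condition at boundary points
    have B1 : ∀ z : Fin n → ℂ, nsq z = ξ ^ 2 →
        (qf W (z - y) (z - y)).re ≤ ϖ * nsq (z - y) := by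
      intro z hz
      have hm := hmax z hz.le
      have hzr : x + z = (x + y) + (z - y) := by abel
      rw [hzr, qf_expand hW] at hm
      have hq : (qf W (x + y) (z - y)).re = (ip g (z - y)).re := by
        rw [qf_eq_ip_mulVec hW, ← hg]
      have h8 : nsq (z - y) = 2 * ξ ^ 2 - 2 * (ip y z).re := by
        have e1 : z - y = z + (-y) := by abel
        rw [e1, nsq_expand, ip_neg_right]
        have e2 : nsq (-y) = nsq y := by simp [nsq]
        have e3 : (ip z y).re = (ip y z).re := by
          rw [ip_conj]; simp [Complex.star_def]
        rw [e2, heq, Complex.neg_re, e3, hz]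
        ring
      have h9 : (ip y (z - y)).re = (ip y z).re - ξ ^ 2 := by
        rw [ip_sub_right, Complex.sub_re, ip_self_re, heq]
      rw [hq, hipg, h9] at hm
      rw [h8]
      linarith
    have SO2 : ∀ v : Fin n → ℂ, ip y v ≠ 0 → (qf W v v).re ≤ ϖ * nsq v := by
      intro v hd
      have hv0 : nsq v ≠ 0 := fun h => hd (by rw [nsq_eq_zero h, ip_zero_right])
      have hm : 0 < nsq v := lt_of_le_of_ne (nsq_nonneg v) (Ne.symm hv0)
      set d := ip y v with hddef
      have hdn : 0 < ‖d‖ := norm_pos_iff.mpr hd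
      set c : ℂ := (-2 : ℂ) * star d / ((nsq v : ℝ) : ℂ) with hc
      have hnsqC : ((nsq v : ℝ) : ℂ) ≠ 0 := Complex.ofReal_ne_zero.mpr hv0
      have hcd : c * d = ((-2 * ‖d‖ ^ 2 / nsq v : ℝ) : ℂ) := by
        have hsd : star d * d = (((‖d‖ : ℝ) : ℂ)) ^ 2 := (norm_sq_coe d).symm
        rw [hc, div_mul_eq_mul_div, mul_assoc, hsd]
        push_cast
        ring
      have hcn : ‖c‖ = 2 * ‖d‖ / nsq v := by
        rw [hc, norm_div, norm_mul, norm_star]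
        simp [RCLike.norm_ofReal, abs_of_pos hm]
      have hznsq : nsq (y + c • v) = ξ ^ 2 := by
        rw [nsq_expand, ip_smul_right, heq, nsq_smul, ← hddef, hcd, hcn]
        rw [Complex.ofReal_re]
        field_simp
        ring
      have hB := B1 (y + c • v) hznsq
      rw [add_sub_cancel_left] at hB
      have hq1 : (qf W (c • v) (c • v)).re = ‖c‖ ^ 2 * (qf W v v).re := by
        rw [qf_smul_left, qf_smul_right, ← mul_assoc, ← norm_sq_coe,
          ← Complex.ofReal_pow, Complex.re_ofReal_mul]
      rw [hq1, nsq_smul] at hB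
      have hc2 : 0 < ‖c‖ ^ 2 := by
        rw [hcn]; positivity
      have hB' : ‖c‖ ^ 2 * (qf W v v).re ≤ ‖c‖ ^ 2 * (ϖ * nsq v) := by
        calc ‖c‖ ^ 2 * (qf W v v).re ≤ ϖ * (‖c‖ ^ 2 * nsq v) := hB
          _ = ‖c‖ ^ 2 * (ϖ * nsq v) := by ring
      exact le_of_mul_le_mul_left hB' hc2
    have SO3 : ∀ v : Fin n → ℂ, (qf W v v).re ≤ ϖ * nsq v := by
      intro v
      by_cases hd : ip y v = 0
      · -- perturb v in the direction of y
        have key : ∀ ε : ℝ, 0 < ε → ε ≤ 1 →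
            (qf W v v).re - ϖ * nsq v ≤ (2 * ϖ * (ip v y).re - 2 * (qf W v y).re) * ε
              + (ϖ * ξ ^ 2 - (qf W y y).re) * ε ^ 2 := by
          intro ε hε hε1
          have hyvε : ip y (v + ((ε : ℝ) : ℂ) • y) ≠ 0 := by
            rw [ip_add_right, ip_smul_right, hd, hyy, zero_add]
            exact mul_ne_zero (Complex.ofReal_ne_zero.mpr hε.ne') hξC
          have h2 := SO2 _ hyvε
          rw [qf_expand hW, nsq_expand, ip_smul_right, nsq_smul, qf_smul_right,
            qf_smul_left, qf_smul_right] at h2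
          simp only [Complex.star_def, Complex.conj_ofReal, Complex.re_ofReal_mul] at h2
          rw [show ‖((ε : ℝ) : ℂ)‖ = |ε| from RCLike.norm_ofReal ε, sq_abs, heq] at h2
          ring_nf at h2 ⊢
          linarith
        have := eps_le _ _ key
        linarith
      · exact SO2 v hd
    exact ⟨ϖ, y, hαre, hyS, hgϖ, by rw [heq]; ring, SO3, hmax⟩



/-- The LMI block matrix. -/
noncomputable def lmiM (W : Matrix (Fin n) (Fin n) ℂ) (x : Fin n → ℂ) (τ ξ ϖ : ℝ) :
    Matrix (Fin n ⊕ Fin 1) (Fin n ⊕ Fin 1) ℂ :=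
  Matrix.fromBlocks
    (ϖ • (1 : Matrix (Fin n) (Fin n) ℂ) - W)
    (-(Matrix.replicateCol (Fin 1) (W.mulVec x)))
    (-(Matrix.replicateRow (Fin 1) (Matrix.vecMul (star x) W)))
    (Matrix.of fun _ _ => ((-(ϖ * ξ ^ 2) - (star x ⬝ᵥ W.mulVec x).re + τ : ℝ) : ℂ))

lemma lmiM_isHermitian {W : Matrix (Fin n) (Fin n) ℂ} (hW : W.IsHermitian)
    (x : Fin n → ℂ) (τ ξ ϖ : ℝ) : (lmiM W x τ ξ ϖ).IsHermitian := by
  rw [lmiM, isHermitian_fromBlocks_iff]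
  refine ⟨?_, ?_, ?_, ?_⟩
  · apply IsHermitian.sub ?_ hW
    unfold IsHermitian
    rw [conjTranspose_smul, star_trivial, conjTranspose_one]
  · rw [conjTranspose_neg, conjTranspose_replicateCol, star_mulVec, hW.eq]
  · rw [conjTranspose_neg, conjTranspose_replicateRow, star_vecMul, star_star, hW.eq]
  · unfold IsHermitian
    ext i j
    simp [conjTranspose_apply, Complex.star_def, Complex.conj_ofReal]

lemma quad_form_eq {W : Matrix (Fin n) (Fin n) ℂ} (hW : W.IsHermitian) (x : Fin n → ℂ)
    (τ ξ ϖ : ℝ) (y : Fin n → ℂ) (t : ℂ) :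
    star (Sum.elim y (fun _ : Fin 1 => t)) ⬝ᵥ
        (lmiM W x τ ξ ϖ).mulVec (Sum.elim y (fun _ : Fin 1 => t))
      = ((ϖ * (nsq y - ξ ^ 2 * ‖t‖ ^ 2) + ‖t‖ ^ 2 * τ
          - (qf W (t • x + y) (t • x + y)).re : ℝ) : ℂ) := by
  have hstar : star (Sum.elim y (fun _ : Fin 1 => t))
      = Sum.elim (star y) (fun _ : Fin 1 => star t) := by
    funext i; cases i <;> rfl
  rw [lmiM, hstar, fromBlocks_mulVec, sumElim_dotProduct_sumElim,
    Sum.elim_comp_inl, Sum.elim_comp_inr]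
  have hA : star y ⬝ᵥ ((ϖ • (1 : Matrix (Fin n) (Fin n) ℂ) - W) *ᵥ y)
      = (ϖ : ℂ) * (nsq y : ℂ) - qf W y y := by
    rw [sub_mulVec, dotProduct_sub, smul_mulVec, one_mulVec, dotProduct_smul,
      ip_self', qf]
    simp [Complex.real_smul]
  have hB : (-(Matrix.replicateCol (Fin 1) (W.mulVec x))) *ᵥ (fun _ : Fin 1 => t)
      = -(t • (W.mulVec x)) := by
    funext i
    simp [neg_mulVec, mulVec, dotProduct, Fin.sum_univ_one, Matrix.replicateCol_apply, mul_comm]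
  have hC : (-(Matrix.replicateRow (Fin 1) (Matrix.vecMul (star x) W))) *ᵥ y
      = fun _ : Fin 1 => -(qf W x y) := by
    rw [neg_mulVec]
    funext i
    simp [Pi.neg_apply, mulVec, Matrix.replicateRow_apply, qf, dotProduct_mulVec]
  have hD : (Matrix.of fun _ _ : Fin 1 =>
        ((-(ϖ * ξ ^ 2) - (star x ⬝ᵥ W.mulVec x).re + τ : ℝ) : ℂ)) *ᵥ (fun _ : Fin 1 => t)
      = fun _ : Fin 1 => ((-(ϖ * ξ ^ 2) - (qf W x x).re + τ : ℝ) : ℂ) * t := by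
    funext i
    simp [mulVec, dotProduct, Fin.sum_univ_one, qf]
  rw [hB, hC, hD, dotProduct_add, dotProduct_add, hA, dotProduct_neg, dotProduct_smul]
  have hd1 : (fun _ : Fin 1 => star t) ⬝ᵥ (fun _ : Fin 1 => -(qf W x y))
      = star t * (-(qf W x y)) := by
    simp [dotProduct, Fin.sum_univ_one]
  have hd2 : (fun _ : Fin 1 => star t) ⬝ᵥ
        (fun _ : Fin 1 => ((-(ϖ * ξ ^ 2) - (qf W x x).re + τ : ℝ) : ℂ) * t)
      = star t * (((-(ϖ * ξ ^ 2) - (qf W x x).re + τ : ℝ) : ℂ) * t) := by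
    simp [dotProduct, Fin.sum_univ_one]
  rw [hd1, hd2]
  push_cast
  rw [qf_self_re_coe hW x, qf_self_re_coe hW (t • x + y)]
  simp only [qf_add_left, qf_add_right, qf_smul_left, qf_smul_right, norm_sq_coe,
    smul_eq_mul]
  unfold qf
  ring

end BallLMI

open BallLMI

/-- **Equivalence of the ball-constrained quadratic constraint and the LMI (eqs. (13)-(14)).** -/
theorem ball_quadratic_iff_LMI {n : ℕ} (Wt : Matrix (Fin n) (Fin n) ℂ)
    (hWt : Wt.IsHermitian) (xh : Fin n → ℂ) (τ ξ : ℝ) (hξ : 0 < ξ) :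
    (∀ Δx : Fin n → ℂ, (∑ i, ‖Δx i‖ ^ 2) ≤ ξ ^ 2 →
        (star (xh + Δx) ⬝ᵥ Wt.mulVec (xh + Δx)).re ≤ τ) ↔
      ∃ ϖ : ℝ, 0 ≤ ϖ ∧
        (Matrix.fromBlocks
          (ϖ • (1 : Matrix (Fin n) (Fin n) ℂ) - Wt)
          (-(Matrix.replicateCol (Fin 1) (Wt.mulVec xh)))
          (-(Matrix.replicateRow (Fin 1) (Matrix.vecMul (star xh) Wt)))
          (Matrix.of fun _ _ =>
            ((-(ϖ * ξ ^ 2) - (star xh ⬝ᵥ Wt.mulVec xh).re + τ : ℝ) : ℂ))).PosSemidef := by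
  constructor
  · intro hyp
    obtain ⟨ϖ, y0, hϖ0, hy0S, hgrad, hcomp, hSO, _⟩ := exists_kkt Wt hWt xh ξ hξ
    have hτ : (qf Wt (xh + y0) (xh + y0)).re ≤ τ := hyp y0 hy0S
    have hpsd : (lmiM Wt xh τ ξ ϖ).PosSemidef := by
      refine PosSemidef.of_dotProduct_mulVec_nonneg (lmiM_isHermitian hWt xh τ ξ ϖ) fun v => ?_
      have hv : v = Sum.elim (fun i => v (Sum.inl i)) (fun _ : Fin 1 => v (Sum.inr 0)) := by
        funext i
        cases i with
        | inl j => rfl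
        | inr j => simp [Fin.eq_zero j]
      rw [hv, quad_form_eq hWt xh τ ξ ϖ, Complex.zero_le_real]
      set y : Fin n → ℂ := fun i => v (Sum.inl i) with hy
      set t : ℂ := v (Sum.inr 0) with ht
      set w : Fin n → ℂ := y - t • y0 with hw
      have hxyw : t • xh + y = t • (xh + y0) + w := by
        rw [hw, smul_add]; abel
      have hyw : y = t • y0 + w := by rw [hw]; abel
      -- expansion of the norm
      have hN : nsq y = ‖t‖ ^ 2 * nsq y0 + 2 * (star t * ip y0 w).re + nsq w := by
        rw [hyw, nsq_expand, ip_smul_left, nsq_smul]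
      -- expansion of the quadratic form
      have hF : (qf Wt (t • xh + y) (t • xh + y)).re
          = ‖t‖ ^ 2 * (qf Wt (xh + y0) (xh + y0)).re
            + 2 * (ϖ * (star t * ip y0 w).re) + (qf Wt w w).re := by
        rw [hxyw, qf_expand hWt]
        simp only [qf_smul_left, qf_smul_right]
        have e1 : qf Wt (xh + y0) w = ((ϖ : ℝ) : ℂ) * ip y0 w := by
          rw [qf_eq_ip_mulVec hWt, hgrad, ip_smul_left, Complex.star_def,
            Complex.conj_ofReal]
        have e2 : (t * (star t * qf Wt (xh + y0) (xh + y0))).re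
            = ‖t‖ ^ 2 * (qf Wt (xh + y0) (xh + y0)).re := by
          rw [← mul_assoc, mul_comm t (star t), ← norm_sq_coe, ← Complex.ofReal_pow,
            Complex.re_ofReal_mul]
        have e3 : (star t * qf Wt (xh + y0) w).re = ϖ * (star t * ip y0 w).re := by
          rw [e1, show star t * (((ϖ : ℝ) : ℂ) * ip y0 w)
              = ((ϖ : ℝ) : ℂ) * (star t * ip y0 w) from by ring,
            Complex.re_ofReal_mul]
        rw [e2, e3]
      have hSOw := hSO w
      have hts : (0 : ℝ) ≤ ‖t‖ ^ 2 := by positivity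
      have hcomp' : ‖t‖ ^ 2 * (ϖ * (ξ ^ 2 - nsq y0)) = 0 := by rw [hcomp, mul_zero]
      have hτ' : 0 ≤ ‖t‖ ^ 2 * (τ - (qf Wt (xh + y0) (xh + y0)).re) :=
        mul_nonneg hts (by linarith)
      rw [hF, hN]
      nlinarith [hSOw, hτ', hcomp']
    exact ⟨ϖ, hϖ0, hpsd⟩
  · rintro ⟨ϖ, hϖ0, hpsd⟩ Δx hΔx
    have hq := (show (lmiM Wt xh τ ξ ϖ).PosSemidef from hpsd).dotProduct_mulVec_nonneg
      (Sum.elim Δx (fun _ : Fin 1 => (1 : ℂ)))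
    rw [quad_form_eq hWt xh τ ξ ϖ, Complex.zero_le_real] at hq
    rw [one_smul, norm_one, one_pow] at hq
    have hΔ : nsq Δx ≤ ξ ^ 2 := hΔx
    have hnn : ϖ * (nsq Δx - ξ ^ 2 * 1) ≤ 0 := by
      apply mul_nonpos_of_nonneg_of_nonpos hϖ0
      linarith
    show (qf Wt (xh + Δx) (xh + Δx)).re ≤ τ
    linarith
end
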